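/- Laurent–Massart upper tail bound: if U is a chi-squared random variable with D degrees of freedom, then for any x > 0, Pr[U − D ≥ 2√(Dx) + 2x] ≤ exp(−x). -/

import Mathlib

open MeasureTheory ProbabilityTheory Real
open scoped ENNReal NNReal

lemma lm_log_le {y : ℝ} (hy : 1 ≤ y) : Real.log y ≤ (y ^ 2 - 1) / (2 * y) := by
  set f : ℝ → ℝ := fun w => w / 2 - (2 * w)⁻¹ - Real.log w with hf
  have hderiv : ∀ z : ℝ, 0 < z →
      HasDerivAt f (1 / 2 - -2 / (2 * z) ^ 2 - z⁻¹) z := by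
    intro z hz
    have h1 : HasDerivAt (fun w : ℝ => w / 2) (1 / 2) z := by
      simpa using (hasDerivAt_id z).div_const 2
    have h2 : HasDerivAt (fun w : ℝ => (2 * w)⁻¹) (-2 / (2 * z) ^ 2) z := by
      have : HasDerivAt (fun w : ℝ => 2 * w) 2 z := by
        simpa using (hasDerivAt_id z).const_mul 2
      exact this.inv (by positivity)
    exact (h1.sub h2).sub (Real.hasDerivAt_log hz.ne')
  have hmono : MonotoneOn f (Set.Ici 1) := by
    apply monotoneOn_of_deriv_nonneg (convex_Ici 1)
    · intro z hz
      have hz1 : (1:ℝ) ≤ z := hz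
      exact ((hderiv z (by linarith)).continuousAt).continuousWithinAt
    · intro z hz
      rw [interior_Ici] at hz
      exact ((hderiv z (by linarith [Set.mem_Ioi.mp hz])).differentiableAt).differentiableWithinAt
    · intro z hz
      rw [interior_Ici] at hz
      have hz1 : (1:ℝ) < z := hz
      rw [(hderiv z (by linarith)).deriv]
      have hzpos : (0:ℝ) < z := by linarith
      have e : 1 / 2 - -2 / (2 * z) ^ 2 - z⁻¹ = (z - 1) ^ 2 / (2 * z ^ 2) := by
        field_simp; ring
      rw [e]; positivity
  have h0 : f 1 ≤ f y := hmono (Set.mem_Ici.mpr le_rfl) (Set.mem_Ici.mpr hy) hy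
  have hy0 : (0:ℝ) < y := by linarith
  have hf1 : f 1 = 0 := by norm_num [hf]
  rw [hf1] at h0
  simp only [hf] at h0
  have : Real.log y ≤ y / 2 - (2 * y)⁻¹ := by linarith
  calc Real.log y ≤ y / 2 - (2 * y)⁻¹ := this
    _ = (y ^ 2 - 1) / (2 * y) := by field_simp

lemma gaussian_sq_exp_eq {t : ℝ} (y : ℝ) :
    gaussianPDFReal 0 1 y * Real.exp (t * y ^ 2)
      = (Real.sqrt (2 * Real.pi))⁻¹ * Real.exp (-(1 / 2 - t) * y ^ 2) := by
  simp only [gaussianPDFReal, NNReal.coe_one, mul_one, sub_zero]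
  rw [mul_assoc, ← Real.exp_add]
  ring_nf

lemma gaussian_sq_exp_integrable' {t : ℝ} (ht : t < 1 / 2) :
    Integrable (fun y => gaussianPDFReal 0 1 y * Real.exp (t * y ^ 2)) := by
  have hb : (0:ℝ) < 1 / 2 - t := by linarith
  have := (integrable_exp_neg_mul_sq hb).const_mul (Real.sqrt (2 * Real.pi))⁻¹
  refine this.congr ?_
  filter_upwards with y
  exact (gaussian_sq_exp_eq y).symm

lemma gaussianReal_eq_withDensity :
    gaussianReal 0 1 = volume.withDensity
      (fun y => ((gaussianPDFReal 0 1 y).toNNReal : ℝ≥0∞)) := by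
  rw [gaussianReal_of_var_ne_zero 0 one_ne_zero]
  rfl

lemma gaussian_sq_exp_integrable {t : ℝ} (ht : t < 1 / 2) :
    Integrable (fun y => Real.exp (t * y ^ 2)) (gaussianReal 0 1) := by
  rw [gaussianReal_eq_withDensity]
  rw [integrable_withDensity_iff_integrable_smul
    ((measurable_gaussianPDFReal 0 1).real_toNNReal)]
  refine (gaussian_sq_exp_integrable' ht).congr ?_
  filter_upwards with y
  simp [NNReal.smul_def, Real.coe_toNNReal _ (gaussianPDFReal_nonneg 0 1 y)]

lemma gaussian_sq_exp_integral {t : ℝ} (ht : t < 1 / 2) :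
    ∫ y, Real.exp (t * y ^ 2) ∂(gaussianReal 0 1) = (Real.sqrt (1 - 2 * t))⁻¹ := by
  have hb : (0:ℝ) < 1 / 2 - t := by linarith
  rw [gaussianReal_eq_withDensity,
    integral_withDensity_eq_integral_smul ((measurable_gaussianPDFReal 0 1).real_toNNReal)]
  have : ∀ y : ℝ, (Real.toNNReal (gaussianPDFReal 0 1 y)) • Real.exp (t * y ^ 2)
      = (Real.sqrt (2 * Real.pi))⁻¹ * Real.exp (-(1 / 2 - t) * y ^ 2) := by
    intro y
    rw [NNReal.smul_def, Real.coe_toNNReal _ (gaussianPDFReal_nonneg 0 1 y)]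
    exact gaussian_sq_exp_eq y
  simp only [this]
  rw [integral_const_mul, integral_gaussian]
  rw [← Real.sqrt_inv, ← Real.sqrt_mul (by positivity), ← Real.sqrt_inv]
  congr 1
  have hπ := Real.pi_pos
  have h2t : (0:ℝ) < 1 - 2 * t := by linarith
  have hne : π * 2 - π * t * 4 ≠ 0 := by nlinarith
  field_simp

theorem laurent_massart_upper_tail
    {Ω : Type*} [MeasurableSpace Ω] (μ : Measure Ω) [IsProbabilityMeasure μ]
    (D : ℕ) (hD : 0 < D) (Z : Fin D → Ω → ℝ)
    (hmeas : ∀ i, Measurable (Z i))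
    (hindep : iIndepFun Z μ)
    (hgauss : ∀ i, μ.map (Z i) = gaussianReal 0 1)
    (x : ℝ) (hx : 0 < x) :
    μ {ω | 2 * Real.sqrt ((D : ℝ) * x) + 2 * x ≤ (∑ i, (Z i ω) ^ 2) - D}
      ≤ ENNReal.ofReal (Real.exp (-x)) := by
  have hDpos : (0:ℝ) < D := Nat.cast_pos.mpr hD
  set s : ℝ := Real.sqrt (x / D) with hs_def
  have hs : 0 < s := Real.sqrt_pos.mpr (div_pos hx hDpos)
  have hsx : s ^ 2 = x / D := Real.sq_sqrt (le_of_lt (div_pos hx hDpos))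
  have hx_eq : x = D * s ^ 2 := by rw [hsx]; field_simp
  have hsqDx : Real.sqrt ((D:ℝ) * x) = D * s := by
    rw [hx_eq, show (D:ℝ) * ((D:ℝ) * s ^ 2) = ((D:ℝ) * s) ^ 2 by ring,
      Real.sqrt_sq (by positivity)]
  set t : ℝ := s / (1 + 2 * s) with ht_def
  have h12s : (0:ℝ) < 1 + 2 * s := by linarith
  have ht_pos : 0 < t := div_pos hs h12s
  have ht_lt : t < 1 / 2 := by
    rw [ht_def, div_lt_iff₀ h12s]; linarith
  have h1sub : 1 - 2 * t = (1 + 2 * s)⁻¹ := by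
    rw [ht_def]; field_simp; ring
  -- squares are independent
  set Y : Fin D → Ω → ℝ := fun i ω => (Z i ω) ^ 2 with hY_def
  have hmeasY : ∀ i, Measurable (Y i) := fun i => (hmeas i).pow_const 2
  have hindepY : iIndepFun Y μ := by
    exact hindep.comp (fun _ y => y ^ 2) (fun _ => measurable_id.pow_const 2)
  -- mgf of each square
  have hint_i : ∀ i, Integrable (fun ω => Real.exp (t * Y i ω)) μ := by
    intro i
    have h := gaussian_sq_exp_integrable ht_lt
    rw [← hgauss i] at h
    have := (integrable_map_measure
      (by rw [hgauss i]; exact (Real.continuous_exp.comp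
        (continuous_const.mul (continuous_pow 2))).aestronglyMeasurable)
      (hmeas i).aemeasurable).mp h
    exact this
  have hmgf_i : ∀ i, mgf (Y i) μ t = (Real.sqrt (1 - 2 * t))⁻¹ := by
    intro i
    rw [mgf]
    have : ∫ ω, Real.exp (t * Y i ω) ∂μ
        = ∫ y, Real.exp (t * y ^ 2) ∂(μ.map (Z i)) := by
      rw [integral_map (hmeas i).aemeasurable
        (by rw [hgauss i]; exact (Real.continuous_exp.comp
          (continuous_const.mul (continuous_pow 2))).aestronglyMeasurable)]
    rw [this, hgauss i, gaussian_sq_exp_integral ht_lt]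
  -- mgf of the sum
  have hmgf_sum : mgf (∑ i, Y i) μ t = ((Real.sqrt (1 - 2 * t))⁻¹) ^ D := by
    rw [hindepY.mgf_sum hmeasY Finset.univ]
    simp [hmgf_i]
  have hintU : Integrable (fun ω => Real.exp (t * (∑ i, Y i) ω)) μ :=
    hindepY.integrable_exp_mul_sum hmeasY (fun i _ => hint_i i)
  set ε : ℝ := (D:ℝ) + 2 * Real.sqrt ((D:ℝ) * x) + 2 * x with hε_def
  have hch := measure_ge_le_exp_mul_mgf (μ := μ) (X := ∑ i, Y i) ε ht_pos.le hintU
  rw [hmgf_sum] at hch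
  -- rewrite the set
  have hset : {ω | 2 * Real.sqrt ((D : ℝ) * x) + 2 * x ≤ (∑ i, (Z i ω) ^ 2) - D}
      = {ω | ε ≤ (∑ i, Y i) ω} := by
    ext ω
    simp only [Set.mem_setOf_eq, hε_def, Finset.sum_apply, hY_def]
    constructor <;> intro h <;> linarith
  rw [hset]
  -- final bound
  have hbound : Real.exp (-t * ε) * ((Real.sqrt (1 - 2 * t))⁻¹) ^ D ≤ Real.exp (-x) := by
    set L : ℝ := Real.log (1 + 2 * s) with hL_def
    have hexp : Real.exp L = 1 + 2 * s := Real.exp_log h12s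
    have hsqrt : (Real.sqrt (1 - 2 * t))⁻¹ = Real.exp (L / 2) := by
      rw [h1sub, Real.sqrt_inv, inv_inv,
        show (1 + 2 * s) = Real.exp (L / 2) ^ 2 by
          rw [← Real.exp_nat_mul]; push_cast; rw [show (2:ℝ) * (L / 2) = L by ring, hexp],
        Real.sqrt_sq (Real.exp_nonneg _)]
    rw [hsqrt, ← Real.exp_nat_mul, ← Real.exp_add, Real.exp_le_exp]
    -- need : -t * ε + D * (L / 2) ≤ -x
    have hL_le : L ≤ 2 * s * (1 + s) / (1 + 2 * s) := by
      have := lm_log_le (y := 1 + 2 * s) (by linarith)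
      rw [← hL_def] at this
      calc L ≤ ((1 + 2 * s) ^ 2 - 1) / (2 * (1 + 2 * s)) := this
        _ = 2 * s * (1 + s) / (1 + 2 * s) := by
            rw [div_eq_div_iff (by positivity) (by positivity)]; ring
    have hεt : t * ε - x = (D:ℝ) * s * (1 + s) / (1 + 2 * s) := by
      rw [hε_def, ht_def, hsqDx, hx_eq]
      field_simp
      ring
    have hD2 : (D:ℝ) * (L / 2) ≤ t * ε - x := by
      rw [hεt]
      have : (D:ℝ) * (L / 2) ≤ (D:ℝ) * (2 * s * (1 + s) / (1 + 2 * s) / 2) := by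
        apply mul_le_mul_of_nonneg_left _ hDpos.le
        linarith
      calc (D:ℝ) * (L / 2) ≤ (D:ℝ) * (2 * s * (1 + s) / (1 + 2 * s) / 2) := this
        _ = (D:ℝ) * s * (1 + s) / (1 + 2 * s) := by ring
    linarith
  have hne : μ {ω | ε ≤ (∑ i, Y i) ω} ≠ ⊤ := measure_ne_top _ _
  rw [← ENNReal.ofReal_toReal hne]
  exact ENNReal.ofReal_le_ofReal (le_trans hch hbound)
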